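/- Let 𝔫 be the 5-dimensional real Lie algebra with orthonormal basis {E₁,…,E₅} and non-zero brackets [E₁,E₂] = m·E₃, [E₁,E₃] = (2/√3)m·E₄, [E₁,E₄] = m·E₅ with m > 0. Then the diagonal endomorphism D defined by D(E₁) = (1/3)m²·E₁, D(E₂) = (3/2)m²·E₂, D(E₃) = (11/6)m²·E₃, D(E₄) = (13/6)m²·E₄, D(E₅) = (5/2)m²·E₅ is a derivation of 𝔫, and Ric = −2m²·Id + D. -/
import Mathlib


open scoped BigOperators

namespace Nilsoliton6

noncomputable section

abbrev V : Type := Fin 5 → ℝ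

/-- The orthonormal basis vectors E₁,…,E₅ (indexed 0,…,4). -/
def E (i : Fin 5) : V := Pi.single i 1

/-- The inner product making `E` an orthonormal basis. -/
def ip (x y : V) : ℝ := ∑ i, x i * y i

/-- `D` is a derivation of the bracket `br`. -/
def IsDerivation (br : V → V → V) (D : V →ₗ[ℝ] V) : Prop :=
  ∀ X Y : V, D (br X Y) = br (D X) Y + br X (D Y)

/-- `Ric` is the Ricci operator of the nilpotent Lie group with left-invariant
metric determined by the bracket `br` and the orthonormal basis `E`. -/
def IsRicci (br : V → V → V) (Ric : V →ₗ[ℝ] V) : Prop :=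
  ∀ X Y : V, ip (Ric X) Y =
      -(1/2) * (∑ i : Fin 5, ip (br X (E i)) (br Y (E i)))
      + (1/4) * (∑ i : Fin 5, ∑ j : Fin 5, ip (br (E i) (E j)) X * ip (br (E i) (E j)) Y)

/-- The bracket: [E₁,E₂] = m·E₃, [E₁,E₃] = (2/√3)m·E₄, [E₁,E₄] = m·E₅. -/
def br (m : ℝ) (X Y : V) : V :=
  (m * (X 0 * Y 1 - X 1 * Y 0)) • E 2 + ((2 / Real.sqrt 3) * m * (X 0 * Y 2 - X 2 * Y 0)) • E 3 + (m * (X 0 * Y 3 - X 3 * Y 0)) • E 4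


lemma fk0 (h : 0 < 5) : (⟨0, h⟩ : Fin 5) = 0 := rfl
lemma fk1 (h : 1 < 5) : (⟨1, h⟩ : Fin 5) = 1 := rfl
lemma fk2 (h : 2 < 5) : (⟨2, h⟩ : Fin 5) = 2 := rfl
lemma fk3 (h : 3 < 5) : (⟨3, h⟩ : Fin 5) = 3 := rfl
lemma fk4 (h : 4 < 5) : (⟨4, h⟩ : Fin 5) = 4 := rfl

lemma E_apply (i j : Fin 5) : E i j = if j = i then 1 else 0 := by
  simp [E, Pi.single_apply]

lemma eq_sum (x : V) : x = ∑ i, x i • E i := by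
  funext j
  simp only [Fin.sum_univ_five, E, Pi.add_apply, Pi.smul_apply, Pi.single_apply, smul_eq_mul]
  fin_cases j <;> simp (config := { decide := true })

lemma ip_E (x : V) (k : Fin 5) : ip x (E k) = x k := by
  simp only [ip, E, Fin.sum_univ_five, Pi.single_apply]
  fin_cases k <;> simp (config := { decide := true })

lemma br_apply (m : ℝ) (X Y : V) :
    br m X Y = ![0, 0, m * (X 0 * Y 1 - X 1 * Y 0),
      (2 / Real.sqrt 3) * m * (X 0 * Y 2 - X 2 * Y 0), m * (X 0 * Y 3 - X 3 * Y 0)] := by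
  funext j
  simp only [br, E, Pi.add_apply, Pi.smul_apply, Pi.single_apply, smul_eq_mul]
  fin_cases j <;> simp (config := { decide := true })

lemma ip_br (m : ℝ) (X Y Z W : V) :
    ip (br m X Y) (br m Z W) =
      m ^ 2 * (X 0 * Y 1 - X 1 * Y 0) * (Z 0 * W 1 - Z 1 * W 0)
      + (4/3) * m ^ 2 * (X 0 * Y 2 - X 2 * Y 0) * (Z 0 * W 2 - Z 2 * W 0)
      + m ^ 2 * (X 0 * Y 3 - X 3 * Y 0) * (Z 0 * W 3 - Z 3 * W 0) := by
  have h43 : (2 / Real.sqrt 3) * (2 / Real.sqrt 3) = 4 / 3 := by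
    rw [div_mul_div_comm, Real.mul_self_sqrt (by norm_num : (0:ℝ) ≤ 3)]
    norm_num
  simp only [ip, Fin.sum_univ_five, br_apply, Matrix.cons_val_zero, Matrix.cons_val_one,
    Matrix.head_cons, Matrix.cons_val_two, Matrix.tail_cons, Matrix.cons_val_three,
    Matrix.cons_val_four]
  linear_combination (m * (X 0 * Y 2 - X 2 * Y 0) * (m * (Z 0 * W 2 - Z 2 * W 0))) * h43

set_option maxHeartbeats 1000000 in
theorem stmt6 (m : ℝ) (hm : 0 < m)
    (Ric : V →ₗ[ℝ] V) (hRic : IsRicci (br m) Ric)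
    (D : V →ₗ[ℝ] V)
    (hD0 : D (E 0) = ((1/3) * m ^ 2) • E 0)
    (hD1 : D (E 1) = ((3/2) * m ^ 2) • E 1)
    (hD2 : D (E 2) = ((11/6) * m ^ 2) • E 2)
    (hD3 : D (E 3) = ((13/6) * m ^ 2) • E 3)
    (hD4 : D (E 4) = ((5/2) * m ^ 2) • E 4) :
    IsDerivation (br m) D ∧
    Ric = (-2 * m ^ 2) • (LinearMap.id : V →ₗ[ℝ] V) + D := by
  have h43 : (2 / Real.sqrt 3) * (2 / Real.sqrt 3) = 4 / 3 := by
    rw [div_mul_div_comm, Real.mul_self_sqrt (by norm_num : (0:ℝ) ≤ 3)]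
    norm_num
  have h43m : 2 / Real.sqrt 3 * m * (2 / Real.sqrt 3 * m) = 4 / 3 * m ^ 2 := by
    rw [show 2 / Real.sqrt 3 * m * (2 / Real.sqrt 3 * m)
        = 2 / Real.sqrt 3 * (2 / Real.sqrt 3) * m ^ 2 from by ring, h43]
  have h43inv : (Real.sqrt 3)⁻¹ ^ 2 = (1:ℝ)/3 := by
    rw [inv_pow, Real.sq_sqrt] <;> norm_num
  have dval : ∀ i : Fin 5, D (E i) = (![(1:ℝ)/3, 3/2, 11/6, 13/6, 5/2] i * m ^ 2) • E i := by
    intro i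
    fin_cases i
    · simpa using hD0
    · simpa using hD1
    · simpa using hD2
    · simpa using hD3
    · simpa using hD4
  constructor
  · -- derivation
    have keyD : ∀ x : V, D x = fun j => (![(1:ℝ)/3, 3/2, 11/6, 13/6, 5/2] j) * m ^ 2 * x j := by
      intro x
      conv_lhs => rw [eq_sum x]
      rw [map_sum]
      simp only [Fin.sum_univ_five, map_smul, hD0, hD1, hD2, hD3, hD4]
      funext j
      simp only [E, Pi.add_apply, Pi.smul_apply, Pi.single_apply, smul_eq_mul]
      fin_cases j <;> simp (config := { decide := true }) <;> ring
    intro X Y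
    rw [keyD (br m X Y), keyD X, keyD Y]
    funext j
    simp only [br, E, Pi.add_apply, Pi.smul_apply, Pi.single_apply, smul_eq_mul]
    fin_cases j <;> simp (config := { decide := true }) <;> ring
  · -- Ricci
    have hR : ∀ X Y : V, ip (Ric X) Y =
        -(1/2) * (∑ i : Fin 5, ip (br m X (E i)) (br m Y (E i)))
        + (1/4) * (∑ i : Fin 5, ∑ j : Fin 5, ip (br m (E i) (E j)) X * ip (br m (E i) (E j)) Y) := hRic
    have key : ∀ i k : Fin 5, Ric (E i) k =
        -(1/2) * (∑ l : Fin 5, ip (br m (E i) (E l)) (br m (E k) (E l)))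
        + (1/4) * (∑ a : Fin 5, ∑ b : Fin 5, ip (br m (E a) (E b)) (E i) * ip (br m (E a) (E b)) (E k)) := by
      intro i k
      rw [← ip_E (Ric (E i)) k]
      exact hR (E i) (E k)
    apply Module.Basis.ext (Pi.basisFun ℝ (Fin 5))
    intro i
    have hb : (Pi.basisFun ℝ (Fin 5)) i = E i := by simp [E]
    rw [hb]
    funext k
    simp only [LinearMap.add_apply, LinearMap.smul_apply, LinearMap.id_apply,
      Pi.add_apply, Pi.smul_apply, smul_eq_mul]
    fin_cases i <;> fin_cases k <;>
    · rw [key]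
      simp only [Fin.sum_univ_five]
      simp only [ip_br]
      simp only [ip_E]
      simp (config := { decide := true }) only [fk0, fk1, fk2, fk3, fk4, br_apply, E_apply,
        dval, Pi.smul_apply, smul_eq_mul, if_true, if_false, Matrix.cons_val_zero,
        Matrix.cons_val_one, Matrix.head_cons, Matrix.cons_val_two, Matrix.tail_cons,
        Matrix.cons_val_three, Matrix.cons_val_four]
      try simp only [h43m]
      try ring
      try (ring_nf; simp only [h43inv]; ring)


end

end Nilsoliton6
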